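/- For every rational number q0 with q0 ≠ 0, q0 ≠ 1, and q0 ≠ -1, the reduced Burau representation of B_3 specialized at q0 is faithful: the group homomorphism B_3 → GL(2, ℚ) determined by σ1 ↦ [[-q0, q0], [0, 1]] and σ2 ↦ [[1, 0], [1, -q0]] is injective. -/

import Mathlib

/-- The braid relation for the braid group `B₃` on generators `σ₁ = of 0`, `σ₂ = of 1`:
`σ₁σ₂σ₁ = σ₂σ₁σ₂`. -/
def braidRels3 : Set (FreeGroup (Fin 2)) :=
  {FreeGroup.of 0 * FreeGroup.of 1 * FreeGroup.of 0 *
    (FreeGroup.of 1 * FreeGroup.of 0 * FreeGroup.of 1)⁻¹}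

/-- The braid group `B₃` as a presented group. -/
abbrev BraidGroup3 : Type := PresentedGroup braidRels3

/-- The standard generators `σ₁, σ₂` of `B₃`. -/
def σ₃ (i : Fin 2) : BraidGroup3 := PresentedGroup.of i

namespace BurauB3

theorem braid3 : σ₃ 0 * σ₃ 1 * σ₃ 0 = σ₃ 1 * σ₃ 0 * σ₃ 1 := by
  have h : PresentedGroup.mk braidRels3 (FreeGroup.of 0 * FreeGroup.of 1 * FreeGroup.of 0 *
      (FreeGroup.of 1 * FreeGroup.of 0 * FreeGroup.of 1)⁻¹) = 1 := by
    apply (QuotientGroup.eq_one_iff _).mpr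
    exact Subgroup.subset_normalClosure rfl
  have h2 : (σ₃ 0 * σ₃ 1 * σ₃ 0) * (σ₃ 1 * σ₃ 0 * σ₃ 1)⁻¹ = 1 := by
    simpa [σ₃, PresentedGroup.of] using h
  group at h2 ⊢
  exact mul_inv_eq_one.mp h2

/-- `b = σ₁σ₂`. -/
def bb : BraidGroup3 := σ₃ 0 * σ₃ 1
/-- `a = σ₁σ₂σ₁`. -/
def aa : BraidGroup3 := σ₃ 0 * σ₃ 1 * σ₃ 0
/-- the central element `z = a² = b³`. -/
def zz : BraidGroup3 := aa * aa

theorem b_cubed : bb * bb * bb = zz := by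
  rw [bb, zz, aa]
  have := braid3
  calc (σ₃ 0 * σ₃ 1) * (σ₃ 0 * σ₃ 1) * (σ₃ 0 * σ₃ 1)
      = (σ₃ 0 * σ₃ 1 * σ₃ 0) * (σ₃ 1 * σ₃ 0 * σ₃ 1) := by group
    _ = (σ₃ 0 * σ₃ 1 * σ₃ 0) * (σ₃ 0 * σ₃ 1 * σ₃ 0) := by rw [← braid3]

theorem a_s1 : aa * σ₃ 0 = σ₃ 1 * aa := by
  conv_lhs => rw [aa, braid3]
  conv_rhs => rw [aa]
  group

theorem a_s2 : aa * σ₃ 1 = σ₃ 0 * aa := by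
  conv_lhs => rw [aa]
  conv_rhs => rw [aa, braid3]
  group

theorem z_s1 : zz * σ₃ 0 = σ₃ 0 * zz := by
  rw [zz, mul_assoc, a_s1, ← mul_assoc, a_s2, mul_assoc]

theorem z_s2 : zz * σ₃ 1 = σ₃ 1 * zz := by
  rw [zz, mul_assoc, a_s2, ← mul_assoc, a_s1, mul_assoc]

theorem z_comm (g : BraidGroup3) : zz * g = g * zz := by
  have : g ∈ Subgroup.centralizer {zz} := by
    apply PresentedGroup.generated_by
    intro j
    fin_cases j <;> rw [Subgroup.mem_centralizer_singleton_iff]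
    · exact (z_s1).symm
    · exact (z_s2).symm
  exact (Subgroup.mem_centralizer_singleton_iff.mp this).symm

/-! ### Alternating words -/

def typ (x : Fin 3) : Bool := decide (x = 0)

def Alt (l : List (Fin 3)) : Prop := List.IsChain (fun a b => typ a ≠ typ b) l

theorem alt_cons_of_typ_eq {x y : Fin 3} {t : List (Fin 3)} (h : Alt (x :: t))
    (hxy : typ x = typ y) : Alt (y :: t) := by
  cases t with
  | nil => exact List.isChain_singleton _
  | cons z zs =>
    rw [Alt, List.isChain_cons_cons] at h ⊢
    exact ⟨hxy ▸ h.1, h.2⟩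

/-- letters of the alternating words: `a`, `b`, `b²`. -/
def mB : Fin 3 → BraidGroup3 := ![aa, bb, bb * bb]

def PB (l : List (Fin 3)) : BraidGroup3 := (l.map mB).prod

@[simp] theorem PB_nil : PB [] = 1 := rfl

theorem PB_cons (x : Fin 3) (l : List (Fin 3)) : PB (x :: l) = mB x * PB l := by
  simp [PB]

theorem PB_append (l₁ l₂ : List (Fin 3)) : PB (l₁ ++ l₂) = PB l₁ * PB l₂ := by
  simp [PB]

theorem z_mB (x : Fin 3) : zz * mB x = mB x * zz := z_comm _

theorem z_PB (l : List (Fin 3)) : zz * PB l = PB l * zz := z_comm _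

/-- multiplying an alternating word by one letter on the left. -/
theorem letter_mul (x : Fin 3) (l : List (Fin 3)) (hl : Alt l) :
    ∃ (j : ℤ) (l' : List (Fin 3)), Alt l' ∧ mB x * PB l = zz ^ j * PB l' := by
  cases l with
  | nil => exact ⟨0, [x], List.isChain_singleton _, by simp [PB_cons]⟩
  | cons y t =>
    have ht : Alt t := (List.isChain_cons.mp hl).2
    by_cases hty : typ x = typ y
    · -- same type: combine
      fin_cases x <;> fin_cases y <;> simp [typ] at hty ⊢ <;> clear hty
      · -- a * a * ...
        exact ⟨1, t, ht, by rw [PB_cons, ← mul_assoc]; simp [mB, zz, Matrix.cons_val_zero]⟩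
      · -- b * b
        refine ⟨0, (2 : Fin 3) :: t, alt_cons_of_typ_eq (show Alt ((1 : Fin 3) :: t) from hl) rfl, ?_⟩
        rw [PB_cons, PB_cons, ← mul_assoc]
        simp [mB]
      · -- b * b²
        refine ⟨1, t, ht, ?_⟩
        rw [PB_cons, ← mul_assoc]
        have : mB 1 * mB 2 = zz ^ (1:ℤ) := by
          simp [mB, ← b_cubed]; group
        rw [this]
      · -- b² * b
        refine ⟨1, t, ht, ?_⟩
        rw [PB_cons, ← mul_assoc]
        have : mB 2 * mB 1 = zz ^ (1:ℤ) := by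
          show bb * bb * bb = zz ^ (1:ℤ); rw [zpow_one, b_cubed]
        rw [this]
      · -- b² * b²  = z * b
        refine ⟨1, (1 : Fin 3) :: t, alt_cons_of_typ_eq (show Alt ((2 : Fin 3) :: t) from hl) rfl, ?_⟩
        rw [PB_cons, PB_cons, ← mul_assoc, ← mul_assoc]
        have : mB 2 * mB 2 = zz ^ (1:ℤ) * mB 1 := by
          simp [mB, ← b_cubed]; group
        rw [this]
    · -- different type: just cons
      refine ⟨0, x :: y :: t, ?_, by simp [PB_cons]⟩
      exact List.isChain_cons_cons.mpr ⟨hty, hl⟩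

theorem zpow_comm_mB (x : Fin 3) (j : ℤ) : mB x * zz ^ j = zz ^ j * mB x :=
  ((Commute.zpow_left (show Commute zz (mB x) from z_mB x) j)).eq.symm

theorem zpow_comm_PB (l : List (Fin 3)) (j : ℤ) : PB l * zz ^ j = zz ^ j * PB l :=
  ((Commute.zpow_left (show Commute zz (PB l) from z_PB l) j)).eq.symm

theorem word_mul (l₁ l₂ : List (Fin 3)) (h₁ : Alt l₁) (h₂ : Alt l₂) :
    ∃ (j : ℤ) (l₃ : List (Fin 3)), Alt l₃ ∧ PB l₁ * PB l₂ = zz ^ j * PB l₃ := by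
  induction l₁ with
  | nil => exact ⟨0, l₂, h₂, by simp⟩
  | cons x t ih =>
    have ht : Alt t := (List.isChain_cons.mp h₁).2
    obtain ⟨j, l₃, hl₃, hj⟩ := ih ht
    obtain ⟨j', l₄, hl₄, hj'⟩ := letter_mul x l₃ hl₃
    refine ⟨j + j', l₄, hl₄, ?_⟩
    rw [PB_cons, mul_assoc, hj, ← mul_assoc, zpow_comm_mB, mul_assoc, hj',
      ← mul_assoc, ← zpow_add]

/-- the inverse letter map : `a⁻¹ = z⁻¹ a`, `b⁻¹ = z⁻¹ b²`, `(b²)⁻¹ = z⁻¹ b`. -/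
def invL : Fin 3 → Fin 3 := ![0, 2, 1]

theorem typ_invL (x : Fin 3) : typ (invL x) = typ x := by fin_cases x <;> rfl

theorem mB_inv (x : Fin 3) : (mB x)⁻¹ = zz ^ (-1 : ℤ) * mB (invL x) := by
  have key : mB (invL x) * mB x = zz := by
    fin_cases x
    · show mB 0 * mB 0 = zz
      simp [mB, zz]
    · show mB 2 * mB 1 = zz
      exact b_cubed
    · show mB 1 * mB 2 = zz
      simp [mB, ← b_cubed]; group
  rw [zpow_neg_one]
  apply inv_eq_of_mul_eq_one_left
  rw [mul_assoc, key, inv_mul_cancel]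

theorem alt_reverse_map_invL {l : List (Fin 3)} (h : Alt l) :
    Alt ((l.reverse).map invL) := by
  rw [Alt, List.isChain_map, List.isChain_reverse]
  exact h.imp (fun a b hab => by simpa [Function.flip_def, typ_invL] using hab.symm)

theorem PB_inv (l : List (Fin 3)) :
    (PB l)⁻¹ = zz ^ (-(l.length : ℤ)) * PB ((l.reverse).map invL) := by
  induction l with
  | nil => simp
  | cons x t ih =>
    rw [PB_cons, mul_inv_rev, ih, mB_inv, List.reverse_cons, List.map_append,
      PB_append]
    calc zz ^ (-(t.length : ℤ)) * PB (t.reverse.map invL) * (zz ^ (-1 : ℤ) * mB (invL x))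
        = zz ^ (-(t.length : ℤ)) * (PB (t.reverse.map invL) * zz ^ (-1 : ℤ)) * mB (invL x) := by
          group
      _ = zz ^ (-(t.length : ℤ)) * (zz ^ (-1 : ℤ) * PB (t.reverse.map invL)) * mB (invL x) := by
          rw [zpow_comm_PB]
      _ = zz ^ (-((t.length : ℤ) + 1)) * (PB (t.reverse.map invL) * PB [invL x]) := by
          rw [show PB [invL x] = mB (invL x) by simp [PB_cons]]
          rw [neg_add, zpow_add]
          group
      _ = zz ^ (-(((x :: t).length : ℤ))) * (PB (t.reverse.map invL) * PB [invL x]) := by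
          norm_num

theorem alt_pair1 : Alt [(2 : Fin 3), 0] := by
  refine List.isChain_cons_cons.mpr ⟨by decide, List.isChain_singleton _⟩

theorem alt_pair2 : Alt [(0 : Fin 3), 2] := by
  refine List.isChain_cons_cons.mpr ⟨by decide, List.isChain_singleton _⟩

/-- The set of elements admitting a normal form, as a subgroup. -/
def NFsub : Subgroup BraidGroup3 where
  carrier := {g | ∃ (k : ℤ) (l : List (Fin 3)), Alt l ∧ g = zz ^ k * PB l}
  one_mem' := ⟨0, [], List.isChain_nil, by simp⟩
  mul_mem' := by
    rintro g₁ g₂ ⟨k₁, l₁, h₁, rfl⟩ ⟨k₂, l₂, h₂, rfl⟩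
    obtain ⟨j, l₃, h₃, hj⟩ := word_mul l₁ l₂ h₁ h₂
    refine ⟨k₁ + k₂ + j, l₃, h₃, ?_⟩
    calc zz ^ k₁ * PB l₁ * (zz ^ k₂ * PB l₂)
        = zz ^ k₁ * (PB l₁ * zz ^ k₂) * PB l₂ := by group
      _ = zz ^ k₁ * (zz ^ k₂ * PB l₁) * PB l₂ := by rw [zpow_comm_PB]
      _ = zz ^ (k₁ + k₂) * (PB l₁ * PB l₂) := by rw [zpow_add]; group
      _ = zz ^ (k₁ + k₂) * (zz ^ j * PB l₃) := by rw [hj]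
      _ = zz ^ (k₁ + k₂ + j) * PB l₃ := by rw [zpow_add]; group
  inv_mem' := by
    rintro g ⟨k, l, h, rfl⟩
    refine ⟨-k - l.length, l.reverse.map invL, alt_reverse_map_invL h, ?_⟩
    rw [mul_inv_rev, PB_inv l]
    calc zz ^ (-(l.length:ℤ)) * PB (l.reverse.map invL) * (zz ^ k)⁻¹
        = zz ^ (-(l.length:ℤ)) * (PB (l.reverse.map invL) * zz ^ (-k)) := by
          rw [← zpow_neg]; group
      _ = zz ^ (-(l.length:ℤ)) * (zz ^ (-k) * PB (l.reverse.map invL)) := by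
          rw [zpow_comm_PB]
      _ = zz ^ (-k - (l.length:ℤ)) * PB (l.reverse.map invL) := by
          rw [sub_eq_add_neg, zpow_add]; group

theorem sigma0_nf : zz * σ₃ 0 = PB [2, 0] := by
  rw [← b_cubed]
  show bb * bb * bb * σ₃ 0 = PB [2, 0]
  have : PB [2, 0] = (bb * bb) * (aa * 1) := rfl
  rw [this, mul_one, mul_assoc (bb * bb)]
  rfl

theorem sigma1_nf : zz * σ₃ 1 = PB [0, 2] := by
  have h : aa * σ₃ 1 = bb * bb := rfl
  have : PB [0, 2] = aa * ((bb * bb) * 1) := rfl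
  rw [this, mul_one, ← h, zz, mul_assoc]

theorem normal_form (g : BraidGroup3) :
    ∃ (k : ℤ) (l : List (Fin 3)), Alt l ∧ g = zz ^ k * PB l := by
  have hmem : g ∈ NFsub := by
    apply PresentedGroup.generated_by
    intro j
    fin_cases j
    · refine ⟨-1, [2, 0], alt_pair1, ?_⟩
      rw [zpow_neg_one, eq_inv_mul_iff_mul_eq]
      exact sigma0_nf
    · refine ⟨-1, [0, 2], alt_pair2, ?_⟩
      rw [zpow_neg_one, eq_inv_mul_iff_mul_eq]
      exact sigma1_nf
  exact hmem

variable (q : ℚ)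

def Xm : Matrix (Fin 2) (Fin 2) ℚ := !![0, -q^2; -q, 0]
def Ym : Matrix (Fin 2) (Fin 2) ℚ := !![0, -q^2; 1, -q]
def Mq : Fin 3 → Matrix (Fin 2) (Fin 2) ℚ := ![Xm q, Ym q, Ym q * Ym q]

theorem YY : Ym q * Ym q = !![-q^2, q^3; -q, 0] := by
  rw [Ym]; ext i j
  fin_cases i <;> fin_cases j <;>
    simp [Matrix.mul_apply, Fin.sum_univ_succ] <;> ring

theorem mulvec0 (v : Fin 2 → ℚ) : (Mq q 0).mulVec v = ![-(q * (q * v 1)), -(q * v 0)] := by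
  funext i
  fin_cases i <;>
    simp [Mq, Xm, Matrix.mulVec, dotProduct, Fin.sum_univ_two, Matrix.vecHead, Matrix.vecTail] <;> ring

theorem mulvec1 (v : Fin 2 → ℚ) : (Mq q 1).mulVec v = ![-(q * (q * v 1)), v 0 - q * v 1] := by
  funext i
  fin_cases i <;>
    simp [Mq, Ym, Matrix.mulVec, dotProduct, Fin.sum_univ_two, Matrix.vecHead, Matrix.vecTail] <;> ring

theorem mulvec2 (v : Fin 2 → ℚ) :
    (Mq q 2).mulVec v = ![-(q * (q * (v 0 - q * v 1))), -(q * v 0)] := by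
  have h2 : Mq q 2 = Ym q * Ym q := by simp [Mq]
  funext i
  rw [h2, YY]
  fin_cases i <;>
    simp [Matrix.mulVec, dotProduct, Fin.sum_univ_two, Matrix.vecHead, Matrix.vecTail] <;> ring

section Padic

variable (p : ℕ) [Fact p.Prime]

theorem normNegMul (a b : ℚ) : padicNorm p (-(a * b)) = padicNorm p a * padicNorm p b := by
  rw [padicNorm.neg, padicNorm.mul]

variable {q}
variable (hq0 : q ≠ 0)

theorem rpos (hq0 : q ≠ 0) : 0 < padicNorm p q :=
  lt_of_le_of_ne (padicNorm.nonneg _) (Ne.symm (padicNorm.nonzero hq0))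

theorem key_lt (hr : padicNorm p q < 1) (v0 v1 : ℚ) (hv0 : v0 ≠ 0)
    (h : padicNorm p v1 ≤ padicNorm p v0) :
    padicNorm p (v0 - q * v1) = padicNorm p v0 := by
  by_cases hv1 : v1 = 0
  · simp [hv1]
  · have hlt : padicNorm p (-(q * v1)) < padicNorm p v0 := by
      rw [normNegMul]
      calc padicNorm p q * padicNorm p v1 < padicNorm p v1 :=
            mul_lt_of_lt_one_left (rpos p hv1) hr
        _ ≤ padicNorm p v0 := h
    rw [sub_eq_add_neg, padicNorm.add_eq_max_of_ne (ne_of_gt hlt),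
      max_eq_left (le_of_lt hlt)]

theorem key_gt (hr : 1 < padicNorm p q) (v0 v1 : ℚ) (hv1 : v1 ≠ 0)
    (h : padicNorm p v0 ≤ padicNorm p v1) :
    padicNorm p (v0 - q * v1) = padicNorm p q * padicNorm p v1 := by
  have hlt : padicNorm p v0 < padicNorm p (-(q * v1)) := by
    rw [normNegMul]
    calc padicNorm p v0 ≤ padicNorm p v1 := h
      _ < padicNorm p q * padicNorm p v1 := lt_mul_of_one_lt_left (rpos p hv1) hr
  rw [sub_eq_add_neg, padicNorm.add_eq_max_of_ne (ne_of_lt hlt),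
    max_eq_right (le_of_lt hlt), normNegMul]

end Padic

section Steps

variable {p : ℕ} [Fact p.Prime] {q : ℚ}

theorem step0_lt (hq0 : q ≠ 0) (v : Fin 2 → ℚ)
    (hv : v 1 ≠ 0 ∧ padicNorm p (v 0) ≤ padicNorm p q * padicNorm p (v 1)) :
    ((Mq q 0).mulVec v) 0 ≠ 0 ∧
      padicNorm p (((Mq q 0).mulVec v) 1) ≤ padicNorm p (((Mq q 0).mulVec v) 0) := by
  obtain ⟨hv1, hle⟩ := hv
  rw [mulvec0]
  constructor
  · simp only [Matrix.cons_val_zero]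
    exact neg_ne_zero.mpr (mul_ne_zero hq0 (mul_ne_zero hq0 hv1))
  · simp only [Matrix.cons_val_zero, Matrix.cons_val_one, Matrix.head_cons]
    rw [normNegMul, normNegMul, padicNorm.mul]
    exact mul_le_mul_of_nonneg_left hle (padicNorm.nonneg _)

theorem step1_lt (hq0 : q ≠ 0) (hr : padicNorm p q < 1) (v : Fin 2 → ℚ)
    (hv : v 0 ≠ 0 ∧ padicNorm p (v 1) ≤ padicNorm p (v 0)) :
    ((Mq q 1).mulVec v) 1 ≠ 0 ∧
      padicNorm p (((Mq q 1).mulVec v) 0) ≤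
        padicNorm p q * padicNorm p (((Mq q 1).mulVec v) 1) := by
  obtain ⟨hv0, hle⟩ := hv
  rw [mulvec1]
  have hkey := key_lt (p := p) hr (v 0) (v 1) hv0 hle
  constructor
  · simp only [Matrix.cons_val_one, Matrix.head_cons]
    intro h
    simp only [Matrix.cons_val_zero] at h
    rw [h, padicNorm.zero] at hkey
    exact hv0 (padicNorm.zero_of_padicNorm_eq_zero hkey.symm)
  · simp only [Matrix.cons_val_zero, Matrix.cons_val_one, Matrix.head_cons]
    rw [normNegMul, padicNorm.mul, hkey]
    apply mul_le_mul_of_nonneg_left _ (padicNorm.nonneg q)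
    calc padicNorm p q * padicNorm p (v 1) ≤ padicNorm p (v 1) :=
          mul_le_of_le_one_left (padicNorm.nonneg _) (le_of_lt hr)
      _ ≤ padicNorm p (v 0) := hle

theorem step2_lt (hq0 : q ≠ 0) (hr : padicNorm p q < 1) (v : Fin 2 → ℚ)
    (hv : v 0 ≠ 0 ∧ padicNorm p (v 1) ≤ padicNorm p (v 0)) :
    ((Mq q 2).mulVec v) 1 ≠ 0 ∧
      padicNorm p (((Mq q 2).mulVec v) 0) ≤
        padicNorm p q * padicNorm p (((Mq q 2).mulVec v) 1) := by
  obtain ⟨hv0, hle⟩ := hv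
  rw [mulvec2]
  have hkey := key_lt (p := p) hr (v 0) (v 1) hv0 hle
  constructor
  · simp only [Matrix.cons_val_one, Matrix.head_cons]
    exact neg_ne_zero.mpr (mul_ne_zero hq0 hv0)
  · simp only [Matrix.cons_val_zero, Matrix.cons_val_one, Matrix.head_cons]
    rw [normNegMul, padicNorm.mul, hkey, normNegMul]

theorem step0_gt (hq0 : q ≠ 0) (v : Fin 2 → ℚ)
    (hv : v 0 ≠ 0 ∧ padicNorm p q * padicNorm p (v 1) ≤ padicNorm p (v 0)) :
    ((Mq q 0).mulVec v) 1 ≠ 0 ∧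
      padicNorm p (((Mq q 0).mulVec v) 0) ≤ padicNorm p (((Mq q 0).mulVec v) 1) := by
  obtain ⟨hv0, hle⟩ := hv
  rw [mulvec0]
  constructor
  · simp only [Matrix.cons_val_one, Matrix.head_cons]
    exact neg_ne_zero.mpr (mul_ne_zero hq0 hv0)
  · simp only [Matrix.cons_val_zero, Matrix.cons_val_one, Matrix.head_cons]
    rw [normNegMul, normNegMul, padicNorm.mul]
    exact mul_le_mul_of_nonneg_left hle (padicNorm.nonneg _)

theorem step1_gt (hq0 : q ≠ 0) (hr : 1 < padicNorm p q) (v : Fin 2 → ℚ)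
    (hv : v 1 ≠ 0 ∧ padicNorm p (v 0) ≤ padicNorm p (v 1)) :
    ((Mq q 1).mulVec v) 0 ≠ 0 ∧
      padicNorm p q * padicNorm p (((Mq q 1).mulVec v) 1) ≤
        padicNorm p (((Mq q 1).mulVec v) 0) := by
  obtain ⟨hv1, hle⟩ := hv
  rw [mulvec1]
  have hkey := key_gt (p := p) hr (v 0) (v 1) hv1 hle
  constructor
  · simp only [Matrix.cons_val_zero]
    exact neg_ne_zero.mpr (mul_ne_zero hq0 (mul_ne_zero hq0 hv1))
  · simp only [Matrix.cons_val_zero, Matrix.cons_val_one, Matrix.head_cons]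
    rw [normNegMul, padicNorm.mul, hkey]

theorem step2_gt (hq0 : q ≠ 0) (hr : 1 < padicNorm p q) (v : Fin 2 → ℚ)
    (hv : v 1 ≠ 0 ∧ padicNorm p (v 0) ≤ padicNorm p (v 1)) :
    ((Mq q 2).mulVec v) 0 ≠ 0 ∧
      padicNorm p q * padicNorm p (((Mq q 2).mulVec v) 1) ≤
        padicNorm p (((Mq q 2).mulVec v) 0) := by
  obtain ⟨hv1, hle⟩ := hv
  rw [mulvec2]
  have hkey := key_gt (p := p) hr (v 0) (v 1) hv1 hle
  constructor
  · simp only [Matrix.cons_val_zero]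
    have hne0 : v 0 - q * v 1 ≠ 0 := by
      intro h
      rw [h, padicNorm.zero] at hkey
      exact (mul_ne_zero (padicNorm.nonzero hq0) (padicNorm.nonzero hv1)) hkey.symm
    exact neg_ne_zero.mpr (mul_ne_zero hq0 (mul_ne_zero hq0 hne0))
  · simp only [Matrix.cons_val_zero, Matrix.cons_val_one, Matrix.head_cons]
    rw [normNegMul, normNegMul, padicNorm.mul, hkey]
    apply mul_le_mul_of_nonneg_left _ (padicNorm.nonneg q)
    apply mul_le_mul_of_nonneg_left _ (padicNorm.nonneg q)
    calc padicNorm p (v 0) ≤ padicNorm p (v 1) := hle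
      _ ≤ padicNorm p q * padicNorm p (v 1) :=
          le_mul_of_one_le_left (padicNorm.nonneg _) (le_of_lt hr)

end Steps


def Pm (l : List (Fin 3)) : Matrix (Fin 2) (Fin 2) ℚ := (l.map (Mq q)).prod

theorem Pm_cons (x : Fin 3) (l : List (Fin 3)) : Pm q (x :: l) = Mq q x * Pm q l := by
  simp [Pm]

theorem Pm_append (l₁ l₂ : List (Fin 3)) : Pm q (l₁ ++ l₂) = Pm q l₁ * Pm q l₂ := by
  simp [Pm]

theorem Pm_singleton (x : Fin 3) : Pm q [x] = Mq q x := by simp [Pm]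

section Engine

variable {A B : (Fin 2 → ℚ) → Prop} {q : ℚ}

theorem chain_main
    (hstep0 : ∀ v, B v → A ((Mq q 0).mulVec v))
    (hstep1 : ∀ v, A v → B ((Mq q 1).mulVec v))
    (hstep2 : ∀ v, A v → B ((Mq q 2).mulVec v)) :
    ∀ (t : List (Fin 3)) (x : Fin 3) (v : Fin 2 → ℚ),
    Alt (x :: t) → (∀ z ∈ (x :: t).getLast?, typ z = false) → A v →
    ((typ x = true → A ((Pm q (x :: t)).mulVec v)) ∧
     (typ x = false → B ((Pm q (x :: t)).mulVec v))) := by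
  intro t
  induction t with
  | nil =>
    intro x v _ hlast hv
    have hx : typ x = false := hlast x (by simp)
    constructor
    · intro h; rw [h] at hx; exact absurd hx (by simp)
    · intro _
      rw [Pm_singleton]
      have : x = 1 ∨ x = 2 := by
        fin_cases x
        · simp [typ] at hx
        · exact Or.inl rfl
        · exact Or.inr rfl
      rcases this with rfl | rfl
      · exact hstep1 v hv
      · exact hstep2 v hv
  | cons y t' ih =>
    intro x v halt hlast hv
    have hxy : typ x ≠ typ y := (List.isChain_cons_cons.mp halt).1
    have htail : Alt (y :: t') := (List.isChain_cons_cons.mp halt).2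
    have hlast' : ∀ z ∈ (y :: t').getLast?, typ z = false := by
      intro z hz
      exact hlast z (by rwa [List.getLast?_cons_cons])
    have IH := ih y v htail hlast' hv
    rw [Pm_cons, ← Matrix.mulVec_mulVec]
    constructor
    · intro hx
      have hy : typ y = false := by
        cases hy : typ y
        · rfl
        · exact absurd (hx.trans hy.symm) hxy
      have hB := IH.2 hy
      have hx0 : x = 0 := by fin_cases x <;> simp_all [typ]
      subst hx0
      exact hstep0 _ hB
    · intro hx
      have hy : typ y = true := by
        cases hy : typ y
        · exact absurd (hx.trans hy.symm) hxy
        · rfl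
      have hA := IH.1 hy
      have : x = 1 ∨ x = 2 := by
        fin_cases x
        · simp [typ] at hx
        · exact Or.inl rfl
        · exact Or.inr rfl
      rcases this with rfl | rfl
      · exact hstep1 _ hA
      · exact hstep2 _ hA

/-- Core ping-pong: an alternating word starting and ending with a `b`-type letter
is not a scalar matrix. -/
theorem nonscalar_BB
    (hstep0 : ∀ v, B v → A ((Mq q 0).mulVec v))
    (hstep1 : ∀ v, A v → B ((Mq q 1).mulVec v))
    (hstep2 : ∀ v, A v → B ((Mq q 2).mulVec v))
    (a₀ : Fin 2 → ℚ) (ha₀ : A a₀)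
    (hB0 : ¬ B 0)
    (hBcone : ∀ (c : ℚ) (v : Fin 2 → ℚ), c ≠ 0 → B (c • v) → B v)
    (hdisj : ∀ v, A v → B v → False)
    (x : Fin 3) (t : List (Fin 3))
    (halt : Alt (x :: t)) (hx : typ x = false)
    (hlast : ∀ z ∈ (x :: t).getLast?, typ z = false) (c : ℚ) :
    Pm q (x :: t) ≠ c • 1 := by
  intro hPl
  have hchain := (chain_main hstep0 hstep1 hstep2 t x a₀ halt hlast ha₀).2 hx
  rw [hPl] at hchain
  have hmv : (c • (1 : Matrix (Fin 2) (Fin 2) ℚ)).mulVec a₀ = c • a₀ := by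
    simp [Matrix.smul_mulVec]
  rw [hmv] at hchain
  have hc : c ≠ 0 := by
    rintro rfl
    rw [zero_smul] at hchain
    exact hB0 hchain
  exact hdisj a₀ ha₀ (hBcone c a₀ hc hchain)

end Engine


theorem exists_padic {q : ℚ} (hq0 : q ≠ 0) (hq1 : q ≠ 1) (hqm1 : q ≠ -1) :
    ∃ p : ℕ, p.Prime ∧ padicNorm p q ≠ 1 := by
  by_cases hd : q.den = 1
  · have hqnum : q = (q.num : ℚ) := by
      rw [← Rat.num_div_den q, hd]; simp
    have h2 : q.num.natAbs ≠ 1 := by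
      intro h
      rcases Int.natAbs_eq_iff.mp h with h' | h'
      · exact hq1 (by rw [hqnum, h']; norm_num)
      · exact hqm1 (by rw [hqnum, h']; norm_num)
    obtain ⟨p, pp, pdvd⟩ := Nat.exists_prime_and_dvd h2
    refine ⟨p, pp, ?_⟩
    haveI := Fact.mk pp
    rw [hqnum, ne_eq, padicNorm.int_eq_one_iff]
    push_neg
    exact Int.natAbs_dvd_natAbs.mp (by simpa using pdvd)
  · obtain ⟨p, pp, pdvd⟩ := Nat.exists_prime_and_dvd hd
    refine ⟨p, pp, ?_⟩
    haveI := Fact.mk pp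
    have hden0 : (q.den : ℚ) ≠ 0 := by
      exact_mod_cast q.den_nz
    have h1 : padicNorm p (q.den : ℚ) < 1 := (padicNorm.nat_lt_one_iff q.den).mpr pdvd
    have h2 : padicNorm p (q.num : ℚ) = 1 := by
      rw [padicNorm.int_eq_one_iff]
      intro hdvd
      have hp1 : p ∣ q.num.natAbs := Int.natAbs_dvd_natAbs.mpr (by simpa using hdvd)
      have := Nat.dvd_gcd hp1 pdvd
      rw [q.reduced] at this
      exact pp.one_lt.ne' (Nat.dvd_one.mp this)
    have heq : padicNorm p q = padicNorm p q.num / padicNorm p q.den := by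
      rw [← padicNorm.div, Rat.num_div_den]
    rw [heq, h2]
    intro hcon
    have hnz : padicNorm p (q.den : ℚ) ≠ 0 := padicNorm.nonzero hden0
    rw [div_eq_one_iff_eq hnz] at hcon
    exact absurd hcon.symm (ne_of_lt h1)



@[simp] theorem Mq0 : Mq q 0 = Xm q := rfl
@[simp] theorem Mq1 : Mq q 1 = Ym q := rfl
@[simp] theorem Mq2 : Mq q 2 = Ym q * Ym q := rfl

theorem XX : Mq q 0 * Mq q 0 = q ^ 3 • (1 : Matrix (Fin 2) (Fin 2) ℚ) := by
  rw [Mq0, Xm]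
  ext i j
  fin_cases i <;> fin_cases j <;>
    simp [Matrix.mul_apply, Fin.sum_univ_succ, Matrix.one_apply] <;> ring

theorem YYY : Ym q * Ym q * Ym q = q ^ 3 • (1 : Matrix (Fin 2) (Fin 2) ℚ) := by
  rw [YY, Ym]; ext i j
  fin_cases i <;> fin_cases j <;>
    simp [Matrix.mul_apply, Fin.sum_univ_succ, Matrix.one_apply] <;> ring

theorem typ_false_cases {x : Fin 3} (hx : typ x = false) : x = 1 ∨ x = 2 := by
  fin_cases x
  · simp [typ] at hx
  · exact Or.inl rfl
  · exact Or.inr rfl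

theorem MfMu (f : Fin 3) (hf : typ f = false) :
    Mq q f * Mq q (invL f) = q ^ 3 • 1 ∧ Mq q (invL f) * Mq q f = q ^ 3 • 1 := by
  rcases typ_false_cases hf with rfl | rfl
  · show Mq q 1 * Mq q 2 = _ ∧ Mq q 2 * Mq q 1 = _
    rw [Mq1, Mq2]
    exact ⟨by rw [← mul_assoc]; exact YYY q, YYY q⟩
  · show Mq q 2 * Mq q 1 = _ ∧ Mq q 1 * Mq q 2 = _
    rw [Mq1, Mq2]
    exact ⟨YYY q, by rw [← mul_assoc]; exact YYY q⟩

theorem Mcube (u : Fin 3) (hu : typ u = false) :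
    ∃ s : ℚ, Mq q u * (Mq q u * Mq q u) = s • 1 := by
  rcases typ_false_cases hu with rfl | rfl
  · exact ⟨q ^ 3, by rw [Mq1, ← mul_assoc]; exact YYY q⟩
  · refine ⟨q ^ 3 * q ^ 3, ?_⟩
    rw [Mq2]
    simp only [← mul_assoc]
    rw [YYY, Matrix.smul_mul, Matrix.smul_mul, Matrix.smul_mul, one_mul, YYY, smul_smul]

section Shapes

variable {q : ℚ}

theorem nonscalar_all (hq0 : q ≠ 0)
    (hBB : ∀ (x : Fin 3) (t : List (Fin 3)), Alt (x :: t) → typ x = false →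
      (∀ z ∈ (x :: t).getLast?, typ z = false) → ∀ c : ℚ, Pm q (x :: t) ≠ c • 1) :
    ∀ (l : List (Fin 3)), Alt l → l ≠ [] → ∀ c : ℚ, Pm q l ≠ c • 1 := by
  have h3ne : (q : ℚ) ^ 3 ≠ 0 := pow_ne_zero 3 hq0
  intro l halt hne c hPl
  obtain ⟨x, t, rfl⟩ : ∃ x t, l = x :: t := by
    cases l with
    | nil => exact absurd rfl hne
    | cons a b => exact ⟨a, b, rfl⟩
  rcases List.eq_nil_or_concat t with rfl | ⟨t', y, rfl⟩
  · -- singleton [x]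
    cases hx : typ x with
    | false =>
      refine hBB x [] halt hx ?_ c hPl
      intro z hz
      simp only [List.getLast?_singleton, Option.mem_def, Option.some.injEq] at hz
      rw [← hz]; exact hx
    | true =>
      have hx0 : x = 0 := by fin_cases x <;> simp_all [typ]
      subst hx0
      rw [Pm_singleton] at hPl
      have h10 := congrFun (congrFun hPl 1) 0
      simp [Mq0, Xm, Matrix.one_apply] at h10
      exact hq0 h10
  · -- l = x :: t' ++ [y]
    simp only [List.concat_eq_append] at halt hne hPl
    have hsplit : Alt (x :: t') ∧
        (∀ a ∈ (x :: t').getLast?, typ a ≠ typ y) := by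
      have : Alt ((x :: t') ++ [y]) := by
        rw [Alt] at halt ⊢
        simpa using halt
      rw [Alt, List.isChain_append] at this
      refine ⟨this.1, fun a ha => ?_⟩
      exact this.2.2 a ha y (by simp)
    cases hx : typ x with
    | false =>
      cases hy : typ y with
      | false =>
        refine hBB x (t' ++ [y]) halt hx ?_ c hPl
        intro z hz
        rw [show x :: (t' ++ [y]) = (x :: t') ++ [y] by simp,
          List.getLast?_concat] at hz
        simp only [Option.mem_def, Option.some.injEq] at hz
        rw [← hz]; exact hy
      | true =>
        -- case 5: head B-type, last = 0
        set u := invL x with hu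
        have hut : typ u = false := by rw [hu, typ_invL]; exact hx
        have hMf := (MfMu q x hx).2
        rw [Pm_cons] at hPl
        have h1 : Mq q u * (Mq q x * Pm q (t' ++ [y])) = c • Mq q u := by
          rw [hPl, Matrix.mul_smul, mul_one]
        rw [← mul_assoc, hMf, Matrix.smul_mul, one_mul] at h1
        have h2 : Pm q (t' ++ [y]) = (q ^ 3)⁻¹ • (c • Mq q u) := by
          rw [← h1, inv_smul_smul₀ h3ne]
        obtain ⟨s, hs⟩ := Mcube q u hut
        have hPl3 : Pm q (u :: ((t' ++ [y]) ++ [u])) = ((q ^ 3)⁻¹ * (c * s)) • 1 := by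
          rw [Pm_cons, Pm_append, Pm_singleton, h2, Matrix.smul_mul, Matrix.smul_mul,
            Matrix.mul_smul, Matrix.mul_smul, hs, smul_smul, smul_smul, mul_assoc]
        have h0 : Alt (u :: (t' ++ [y])) :=
          alt_cons_of_typ_eq halt (typ_invL x).symm
        have halt3 : Alt (u :: ((t' ++ [y]) ++ [u])) := by
          rw [Alt, show u :: ((t' ++ [y]) ++ [u]) = (u :: (t' ++ [y])) ++ [u] by simp,
            List.isChain_append]
          refine ⟨h0, List.isChain_singleton _, ?_⟩
          intro a ha b hb
          rw [show u :: (t' ++ [y]) = (u :: t') ++ [y] by simp, List.getLast?_concat] at ha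
          have ha' : a = y := by symm; simpa using ha
          have hb' : b = u := by symm; simpa using hb
          rw [ha', hb', hy, hut]
          simp
        have hlast3 : ∀ z ∈ (u :: ((t' ++ [y]) ++ [u])).getLast?, typ z = false := by
          intro z hz
          rw [show u :: ((t' ++ [y]) ++ [u]) = (u :: (t' ++ [y])) ++ [u] by simp,
            List.getLast?_concat] at hz
          have hz' : z = u := by symm; simpa using hz
          rw [hz']; exact hut
        exact hBB u ((t' ++ [y]) ++ [u]) halt3 hut hlast3 _ hPl3
    | true =>
      have hx0 : x = 0 := by fin_cases x <;> simp_all [typ]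
      subst hx0
      cases hy : typ y with
      | false =>
        -- case 4: head 0, last B-type
        set u := invL y with hu
        have hut : typ u = false := by rw [hu, typ_invL]; exact hy
        have hMf := (MfMu q y hy).1
        rw [show (0 : Fin 3) :: (t' ++ [y]) = ((0 : Fin 3) :: t') ++ [y] by simp,
          Pm_append, Pm_singleton] at hPl
        have h1 : Pm q (0 :: t') * Mq q y * Mq q u = c • Mq q u := by
          rw [hPl, Matrix.smul_mul, one_mul]
        rw [mul_assoc, hMf, Matrix.mul_smul, mul_one] at h1
        have h2 : Pm q ((0 : Fin 3) :: t') = (q ^ 3)⁻¹ • (c • Mq q u) := by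
          rw [← h1, inv_smul_smul₀ h3ne]
        obtain ⟨s, hs⟩ := Mcube q u hut
        have hPl2 : Pm q (u :: (((0 : Fin 3) :: t') ++ [u])) = ((q ^ 3)⁻¹ * (c * s)) • 1 := by
          rw [Pm_cons, Pm_append, Pm_singleton, h2, Matrix.smul_mul, Matrix.smul_mul,
            Matrix.mul_smul, Matrix.mul_smul, hs, smul_smul, smul_smul, mul_assoc]
        have halt2 : Alt (u :: (((0 : Fin 3) :: t') ++ [u])) := by
          rw [Alt, show u :: (((0 : Fin 3) :: t') ++ [u]) = (u :: (0 : Fin 3) :: t') ++ [u]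
            by simp, List.isChain_append]
          refine ⟨List.isChain_cons_cons.mpr ⟨by rw [hut]; simp [typ], hsplit.1⟩,
            List.isChain_singleton _, ?_⟩
          intro a ha b hb
          have hb' : b = u := by symm; simpa using hb
          rw [List.getLast?_cons_cons] at ha
          have ha' : typ a ≠ typ y := hsplit.2 a ha
          rw [hy] at ha'
          have : typ a = true := by
            cases hta : typ a
            · rw [hta] at ha'; exact absurd rfl ha'
            · rfl
          rw [hb', hut, this]
          simp
        have hlast2 : ∀ z ∈ (u :: (((0 : Fin 3) :: t') ++ [u])).getLast?, typ z = false := by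
          intro z hz
          rw [show u :: (((0 : Fin 3) :: t') ++ [u]) = (u :: (0 : Fin 3) :: t') ++ [u] by simp,
            List.getLast?_concat] at hz
          have hz' : z = u := by symm; simpa using hz
          rw [hz']; exact hut
        exact hBB u (((0 : Fin 3) :: t') ++ [u]) halt2 hut hlast2 _ hPl2
      | true =>
        -- case 3: head 0, last 0
        have hy0 : y = 0 := by fin_cases y <;> simp_all [typ]
        subst hy0
        obtain ⟨w, t'', rfl⟩ : ∃ w t'', t' = w :: t'' := by
          cases t' with
          | nil =>
            exfalso
            have := (List.isChain_cons_cons.mp (show Alt ((0 : Fin 3) :: [] ++ [0]) from halt)).1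
            simp at this
          | cons a b => exact ⟨a, b, rfl⟩
        have hw : typ w = false := by
          have := (List.isChain_cons_cons.mp halt).1
          cases htw : typ w
          · rfl
          · exact absurd (by rw [htw]; rfl : typ (0 : Fin 3) = typ w) this
        have haltw : Alt (w :: t'') := (List.isChain_cons_cons.mp hsplit.1).2
        have hXX := XX q
        rw [Pm_cons, show (w :: t'') ++ [(0 : Fin 3)] = (w :: t'') ++ [0] from rfl,
          Pm_append, Pm_singleton] at hPl
        -- hPl : Mq 0 * (Pm (w::t'') * Mq 0) = c • 1
        have h1 : Mq q 0 * (Mq q 0 * (Pm q (w :: t'') * Mq q 0)) = c • Mq q 0 := by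
          rw [hPl, Matrix.mul_smul, mul_one]
        rw [← mul_assoc, hXX, Matrix.smul_mul, one_mul] at h1
        have h2 : Pm q (w :: t'') * Mq q 0 = (q ^ 3)⁻¹ • (c • Mq q 0) := by
          rw [← h1, inv_smul_smul₀ h3ne]
        have h3 : Pm q (w :: t'') * (Mq q 0 * Mq q 0) = ((q ^ 3)⁻¹ • (c • Mq q 0)) * Mq q 0 := by
          rw [← mul_assoc, h2]
        rw [hXX, Matrix.mul_smul, mul_one, Matrix.smul_mul, Matrix.smul_mul, hXX,
          smul_smul, smul_smul] at h3
        have h4 : Pm q (w :: t'') = ((q ^ 3)⁻¹ * ((q ^ 3)⁻¹ * c * q ^ 3)) • 1 := by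
          rw [← inv_smul_smul₀ h3ne (Pm q (w :: t'')), h3, smul_smul]
        have hlastw : ∀ z ∈ (w :: t'').getLast?, typ z = false := by
          intro z hz
          have ha' := hsplit.2 z (by rwa [List.getLast?_cons_cons])
          rw [hy] at ha'
          cases htz : typ z
          · rfl
          · exact absurd (by simp [htz]) ha'
        exact hBB w t'' haltw hw hlastw _ h4

end Shapes

section Inst

variable {q : ℚ}

theorem nonscalar_BB_rat (hq0 : q ≠ 0) (hq1 : q ≠ 1) (hqm1 : q ≠ -1) :
    ∀ (x : Fin 3) (t : List (Fin 3)), Alt (x :: t) → typ x = false →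
      (∀ z ∈ (x :: t).getLast?, typ z = false) → ∀ c : ℚ, Pm q (x :: t) ≠ c • 1 := by
  obtain ⟨p, pp, hne⟩ := exists_padic hq0 hq1 hqm1
  haveI := Fact.mk pp
  intro x t halt hx hlast c
  rcases lt_or_gt_of_ne hne with hr | hr
  · refine nonscalar_BB
      (A := fun v => v 0 ≠ 0 ∧ padicNorm p (v 1) ≤ padicNorm p (v 0))
      (B := fun v => v 1 ≠ 0 ∧ padicNorm p (v 0) ≤ padicNorm p q * padicNorm p (v 1))
      (fun v hv => step0_lt hq0 v hv) (fun v hv => step1_lt hq0 hr v hv)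
      (fun v hv => step2_lt hq0 hr v hv) ![1, 0]
      ⟨by simp, by simp [padicNorm.zero, padicNorm.one]⟩ ?_ ?_ ?_ x t halt hx hlast c
    · rintro ⟨h, -⟩; exact h rfl
    · rintro c' v hc' ⟨hB1, hB2⟩
      rw [Pi.smul_apply, Pi.smul_apply, smul_eq_mul, smul_eq_mul, padicNorm.mul,
        padicNorm.mul] at hB2
      refine ⟨by rintro h; rw [Pi.smul_apply, h, smul_eq_mul, mul_zero] at hB1; exact hB1 rfl, ?_⟩
      have hcpos : 0 < padicNorm p c' := rpos p hc'
      have hB2' : padicNorm p c' * padicNorm p (v 0) ≤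
          padicNorm p c' * (padicNorm p q * padicNorm p (v 1)) := by
        calc padicNorm p c' * padicNorm p (v 0)
            ≤ padicNorm p q * (padicNorm p c' * padicNorm p (v 1)) := hB2
          _ = padicNorm p c' * (padicNorm p q * padicNorm p (v 1)) := by ring
      exact le_of_mul_le_mul_left hB2' hcpos
    · rintro v ⟨hA1, hA2⟩ ⟨hB1, hB2⟩
      have hlt : padicNorm p q * padicNorm p (v 1) < padicNorm p (v 1) :=
        mul_lt_of_lt_one_left (rpos p hB1) hr
      linarith
  · refine nonscalar_BB
      (A := fun v => v 1 ≠ 0 ∧ padicNorm p (v 0) ≤ padicNorm p (v 1))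
      (B := fun v => v 0 ≠ 0 ∧ padicNorm p q * padicNorm p (v 1) ≤ padicNorm p (v 0))
      (fun v hv => step0_gt hq0 v hv) (fun v hv => step1_gt hq0 hr v hv)
      (fun v hv => step2_gt hq0 hr v hv) ![0, 1]
      ⟨by simp, by simp [padicNorm.zero, padicNorm.one]⟩ ?_ ?_ ?_ x t halt hx hlast c
    · rintro ⟨h, -⟩; exact h rfl
    · rintro c' v hc' ⟨hB1, hB2⟩
      rw [Pi.smul_apply, Pi.smul_apply, smul_eq_mul, smul_eq_mul, padicNorm.mul,
        padicNorm.mul] at hB2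
      refine ⟨by rintro h; rw [Pi.smul_apply, h, smul_eq_mul, mul_zero] at hB1; exact hB1 rfl, ?_⟩
      have hcpos : 0 < padicNorm p c' := rpos p hc'
      have hB2' : padicNorm p c' * (padicNorm p q * padicNorm p (v 1)) ≤
          padicNorm p c' * padicNorm p (v 0) := by
        calc padicNorm p c' * (padicNorm p q * padicNorm p (v 1))
            = padicNorm p q * (padicNorm p c' * padicNorm p (v 1)) := by ring
          _ ≤ padicNorm p c' * padicNorm p (v 0) := hB2
      exact le_of_mul_le_mul_left hB2' hcpos
    · rintro v ⟨hA1, hA2⟩ ⟨hB1, hB2⟩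
      have hlt : padicNorm p (v 1) < padicNorm p q * padicNorm p (v 1) :=
        lt_mul_of_one_lt_left (rpos p hA1) hr
      linarith

end Inst

end BurauB3

/-- for every rational `q0 ∉ {0, 1, -1}`, the reduced Burau representation
of `B₃` specialized at `q0` is injective. -/
theorem burau_B3_faithful_at_rational
    (q0 : ℚ) (h0 : q0 ≠ 0) (hone : q0 ≠ 1) (hnegone : q0 ≠ -1)
    (ρ : BraidGroup3 →* Matrix.GeneralLinearGroup (Fin 2) ℚ)
    (h1 : (ρ (σ₃ 0) : Matrix (Fin 2) (Fin 2) ℚ) = !![-q0, q0; 0, 1])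
    (h2 : (ρ (σ₃ 1) : Matrix (Fin 2) (Fin 2) ℚ) = !![1, 0; 1, -q0]) :
    Function.Injective ρ := by
  rw [injective_iff_map_eq_one]
  intro g hg
  obtain ⟨k, l, hl, rfl⟩ := BurauB3.normal_form g
  have h3ne : q0 ^ 3 ≠ 0 := pow_ne_zero _ h0
  have hmulM : !![-q0, q0; 0, 1] * !![1, 0; 1, -q0] = BurauB3.Ym q0 := by
    rw [BurauB3.Ym]
    ext i j
    fin_cases i <;> fin_cases j <;>
      simp [Matrix.mul_apply, Fin.sum_univ_succ] <;> ring
  have hb : ((ρ BurauB3.bb : Matrix (Fin 2) (Fin 2) ℚ)) = BurauB3.Ym q0 := by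
    rw [show BurauB3.bb = σ₃ 0 * σ₃ 1 from rfl, map_mul, Units.val_mul, h1, h2, hmulM]
  have hYM : BurauB3.Ym q0 * !![-q0, q0; 0, 1] = BurauB3.Xm q0 := by
    rw [BurauB3.Ym, BurauB3.Xm]
    ext i j
    fin_cases i <;> fin_cases j <;>
      simp [Matrix.mul_apply, Fin.sum_univ_succ] <;> ring
  have ha : ((ρ BurauB3.aa : Matrix (Fin 2) (Fin 2) ℚ)) = BurauB3.Xm q0 := by
    rw [show BurauB3.aa = BurauB3.bb * σ₃ 0 from rfl, map_mul, Units.val_mul, hb, h1, hYM]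
  have hz : ((ρ BurauB3.zz : Matrix (Fin 2) (Fin 2) ℚ)) = q0 ^ 3 • 1 := by
    rw [show BurauB3.zz = BurauB3.aa * BurauB3.aa from rfl, map_mul, Units.val_mul, ha]
    have h := BurauB3.XX q0
    rwa [BurauB3.Mq0] at h
  have hmB : ∀ x : Fin 3, ((ρ (BurauB3.mB x) : Matrix (Fin 2) (Fin 2) ℚ)) = BurauB3.Mq q0 x := by
    intro x
    fin_cases x
    · show ((ρ (BurauB3.mB 0) : Matrix (Fin 2) (Fin 2) ℚ)) = BurauB3.Mq q0 0
      rw [show BurauB3.mB 0 = BurauB3.aa from rfl, ha, BurauB3.Mq0]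
    · show ((ρ (BurauB3.mB 1) : Matrix (Fin 2) (Fin 2) ℚ)) = BurauB3.Mq q0 1
      rw [show BurauB3.mB 1 = BurauB3.bb from rfl, hb, BurauB3.Mq1]
    · show ((ρ (BurauB3.mB 2) : Matrix (Fin 2) (Fin 2) ℚ)) = BurauB3.Mq q0 2
      rw [show BurauB3.mB 2 = BurauB3.bb * BurauB3.bb from rfl, map_mul, Units.val_mul, hb,
        BurauB3.Mq2]
  have hPB : ∀ l : List (Fin 3),
      ((ρ (BurauB3.PB l) : Matrix (Fin 2) (Fin 2) ℚ)) = BurauB3.Pm q0 l := by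
    intro l
    induction l with
    | nil =>
      rw [show BurauB3.PB [] = 1 from rfl, map_one, Units.val_one,
        show BurauB3.Pm q0 [] = 1 from rfl]
    | cons x t ih =>
      rw [BurauB3.PB_cons, map_mul, Units.val_mul, hmB, ih, BurauB3.Pm_cons]
  have hzinv : (((ρ BurauB3.zz)⁻¹ : Matrix.GeneralLinearGroup (Fin 2) ℚ) :
      Matrix (Fin 2) (Fin 2) ℚ) = (q0 ^ 3)⁻¹ • 1 := by
    have hu : (((ρ BurauB3.zz)⁻¹ : Matrix.GeneralLinearGroup (Fin 2) ℚ) :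
        Matrix (Fin 2) (Fin 2) ℚ) * ((ρ BurauB3.zz : Matrix (Fin 2) (Fin 2) ℚ)) = 1 := by
      rw [← Units.val_mul, inv_mul_cancel, Units.val_one]
    have hone1 : (q0 ^ 3 • (1 : Matrix (Fin 2) (Fin 2) ℚ)) * ((q0 ^ 3)⁻¹ • 1) = 1 := by
      rw [Matrix.smul_mul, Matrix.mul_smul, one_mul, smul_smul, mul_inv_cancel₀ h3ne, one_smul]
    calc (((ρ BurauB3.zz)⁻¹ : Matrix.GeneralLinearGroup (Fin 2) ℚ) : Matrix (Fin 2) (Fin 2) ℚ)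
        = (((ρ BurauB3.zz)⁻¹ : Matrix.GeneralLinearGroup (Fin 2) ℚ) : Matrix (Fin 2) (Fin 2) ℚ) *
          ((q0 ^ 3 • 1) * ((q0 ^ 3)⁻¹ • 1)) := by rw [hone1, mul_one]
      _ = ((((ρ BurauB3.zz)⁻¹ : Matrix.GeneralLinearGroup (Fin 2) ℚ) : Matrix (Fin 2) (Fin 2) ℚ) *
          ((ρ BurauB3.zz : Matrix (Fin 2) (Fin 2) ℚ))) * ((q0 ^ 3)⁻¹ • 1) := by
            rw [hz, mul_assoc]
      _ = (q0 ^ 3)⁻¹ • 1 := by rw [hu, one_mul]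
  have hzk : ∀ m : ℤ, ((ρ BurauB3.zz ^ m : Matrix.GeneralLinearGroup (Fin 2) ℚ) :
      Matrix (Fin 2) (Fin 2) ℚ) = (q0 ^ (3 * m)) • 1 := by
    intro m
    induction m using Int.induction_on with
    | zero => simp
    | succ n ih =>
      rw [zpow_add_one, Units.val_mul, ih, hz]
      rw [Matrix.smul_mul, Matrix.mul_smul, one_mul, smul_smul]
      congr 1
      rw [show (3 : ℤ) * ((n : ℤ) + 1) = 3 * n + 3 by ring, zpow_add₀ h0,
        ← zpow_natCast q0 3]
      norm_num
    | pred n ih =>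
      rw [zpow_sub_one, Units.val_mul, ih, hzinv]
      rw [Matrix.smul_mul, Matrix.mul_smul, one_mul, smul_smul]
      congr 1
      rw [show (3 : ℤ) * (-(n : ℤ) - 1) = 3 * (-(n : ℤ)) + (-3) by ring, zpow_add₀ h0]
      congr 1
  have hsplit : ρ (BurauB3.zz ^ k * BurauB3.PB l) = ρ BurauB3.zz ^ k * ρ (BurauB3.PB l) := by
    rw [map_mul, map_zpow]
  have hval : ((ρ BurauB3.zz ^ k : Matrix.GeneralLinearGroup (Fin 2) ℚ) :
      Matrix (Fin 2) (Fin 2) ℚ) * ((ρ (BurauB3.PB l) : Matrix (Fin 2) (Fin 2) ℚ)) = 1 := by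
    rw [← Units.val_mul, ← hsplit, hg, Units.val_one]
  rw [hzk, hPB, Matrix.smul_mul, one_mul] at hval
  cases l with
  | cons x t =>
    exfalso
    have h3k : (q0 ^ (3 * k) : ℚ) ≠ 0 := zpow_ne_zero _ h0
    have hscal : BurauB3.Pm q0 (x :: t) = (q0 ^ (3 * k))⁻¹ • 1 := by
      rw [← inv_smul_smul₀ h3k (BurauB3.Pm q0 (x :: t)), hval]
    exact BurauB3.nonscalar_all h0 (BurauB3.nonscalar_BB_rat h0 hone hnegone) (x :: t) hl
      (List.cons_ne_nil _ _) _ hscal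
  | nil =>
    rw [show BurauB3.Pm q0 [] = 1 from rfl] at hval
    have hc : (q0 ^ (3 * k) : ℚ) = 1 := by
      have h00 := congrFun (congrFun hval 0) 0
      simpa [Matrix.smul_apply, Matrix.one_apply] using h00
    have hk : k = 0 := by
      by_contra hk
      have h3k0 : 3 * k ≠ 0 := by omega
      have hn0 : (3 * k).natAbs ≠ 0 := Int.natAbs_ne_zero.mpr h3k0
      have hqn : q0 ^ (3 * k).natAbs = 1 := by
        rcases Int.natAbs_eq (3 * k) with he | he
        · rw [he, zpow_natCast] at hc; exact hc
        · rw [he, zpow_neg, zpow_natCast] at hc; exact inv_eq_one.mp hc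
      rcases (pow_eq_one_iff_of_ne_zero hn0).mp hqn with h | h
      · exact hone h
      · exact hnegone h.1
    subst hk
    rw [zpow_zero, one_mul]
    rfl
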